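/- arXiv:2502.05152 — 4 statements merged into one kernel-verified Lean document; each statement's English description precedes it below -/
import Mathlib

section
/- For every integer s ≥ 1 and every μ > 0, the function ρ ↦ W(ρ,s,μ) is strictly increasing on the open interval (0,1). -/
open Finset

/-- `T1(ρ,s) = (ρ s)^s / ((1-ρ) s!)`. -/
noncomputable def T1 (ρ : ℝ) (s : ℕ) : ℝ :=
  (ρ * (s : ℝ)) ^ s / ((1 - ρ) * (Nat.factorial s : ℝ))

/-- `T2(ρ,s) = Σ_{r=0}^{s-1} (ρ s)^r / r!`. -/
noncomputable def T2 (ρ : ℝ) (s : ℕ) : ℝ :=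
  ∑ r ∈ Finset.range s, (ρ * (s : ℝ)) ^ r / (Nat.factorial r : ℝ)

/-- The Erlang delay probability `P(ρ,s)`. -/
noncomputable def ErlangP (ρ : ℝ) (s : ℕ) : ℝ :=
  (ρ * (s : ℝ)) ^ s / ((1 - ρ) * (Nat.factorial s : ℝ) * (T1 ρ s + T2 ρ s))

/-- The M/M/s expected time in system `W(ρ,s,μ) = P(ρ,s)/(μ s (1-ρ)) + 1/μ`. -/
noncomputable def Wtime (ρ : ℝ) (s : ℕ) (μ : ℝ) : ℝ :=
  ErlangP ρ s / (μ * (s : ℝ) * (1 - ρ)) + 1 / μ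

noncomputable def Gfun (ρ : ℝ) (s : ℕ) : ℝ :=
  (1 - ρ) ^ 2 * (Nat.factorial s : ℝ) * (T1 ρ s + T2 ρ s) / (ρ * (s : ℝ)) ^ s

lemma T12_pos {ρ : ℝ} {s : ℕ} (hs : 1 ≤ s) (h0 : 0 < ρ) (h1 : ρ < 1) :
    0 < T1 ρ s + T2 ρ s := by
  have hs' : (0:ℝ) < s := by exact_mod_cast hs
  have ha : 0 < ρ * s := mul_pos h0 hs'
  have hT1 : 0 < T1 ρ s := by
    unfold T1
    apply div_pos (pow_pos ha s)
    have : (0:ℝ) < Nat.factorial s := by positivity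
    have : (0:ℝ) < 1 - ρ := by linarith
    positivity
  have hT2 : 0 ≤ T2 ρ s := by
    unfold T2
    apply Finset.sum_nonneg
    intro r _
    positivity
  linarith

lemma Gfun_pos {ρ : ℝ} {s : ℕ} (hs : 1 ≤ s) (h0 : 0 < ρ) (h1 : ρ < 1) :
    0 < Gfun ρ s := by
  have hs' : (0:ℝ) < s := by exact_mod_cast hs
  have ha : 0 < ρ * s := mul_pos h0 hs'
  have hS := T12_pos hs h0 h1
  have h1ρ : (0:ℝ) < 1 - ρ := by linarith
  unfold Gfun
  have : (0:ℝ) < Nat.factorial s := by positivity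
  positivity

lemma Wtime_eq {ρ μ : ℝ} {s : ℕ} (hs : 1 ≤ s) (h0 : 0 < ρ) (h1 : ρ < 1)
    (hμ : 0 < μ) : Wtime ρ s μ = 1 / (μ * (s : ℝ) * Gfun ρ s) + 1 / μ := by
  have hs' : (0:ℝ) < s := by exact_mod_cast hs
  have ha : 0 < ρ * (s:ℝ) := mul_pos h0 hs'
  have hA : 0 < (ρ * (s:ℝ)) ^ s := pow_pos ha s
  have hS := T12_pos hs h0 h1
  have h1ρ : (0:ℝ) < 1 - ρ := by linarith
  have hF : (0:ℝ) < Nat.factorial s := by positivity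
  unfold Wtime ErlangP Gfun
  set S := T1 ρ s + T2 ρ s with hSdef
  field_simp

lemma Gfun_expand {ρ : ℝ} {s : ℕ} (hs : 1 ≤ s) (h0 : 0 < ρ) (h1 : ρ < 1) :
    Gfun ρ s = (1 - ρ) + ∑ r ∈ Finset.range s,
      ((1 - ρ) ^ 2 * ((Nat.factorial s : ℝ) / (Nat.factorial r : ℝ))) /
        (ρ * (s : ℝ)) ^ (s - r) := by
  have hs' : (0:ℝ) < s := by exact_mod_cast hs
  have ha : 0 < ρ * (s:ℝ) := mul_pos h0 hs'
  have hA : 0 < (ρ * (s:ℝ)) ^ s := pow_pos ha s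
  have h1ρ : (0:ℝ) < 1 - ρ := by linarith
  have hF : (0:ℝ) < Nat.factorial s := by positivity
  unfold Gfun T1 T2
  rw [mul_add, add_div]
  congr 1
  · field_simp
  · rw [Finset.mul_sum, Finset.sum_div]
    apply Finset.sum_congr rfl
    intro r hr
    have hrs : r < s := Finset.mem_range.mp hr
    have hpow : (ρ * (s:ℝ)) ^ s = (ρ * (s:ℝ)) ^ r * (ρ * (s:ℝ)) ^ (s - r) := by
      rw [← pow_add]
      congr 1
      omega
    have hFr : (0:ℝ) < Nat.factorial r := by positivity
    have hAr : 0 < (ρ * (s:ℝ)) ^ r := pow_pos ha r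
    have hAsr : 0 < (ρ * (s:ℝ)) ^ (s - r) := pow_pos ha (s - r)
    rw [hpow]
    field_simp

lemma Gfun_anti {x y : ℝ} {s : ℕ} (hs : 1 ≤ s) (hx0 : 0 < x) (hy1 : y < 1)
    (hxy : x < y) : Gfun y s < Gfun x s := by
  have hy0 : 0 < y := lt_trans hx0 hxy
  have hx1 : x < 1 := lt_trans hxy hy1
  rw [Gfun_expand hs hx0 hx1, Gfun_expand hs hy0 hy1]
  have hs' : (0:ℝ) < s := by exact_mod_cast hs
  apply add_lt_add_of_lt_of_le (by linarith)
  apply Finset.sum_le_sum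
  intro r hr
  have hrs : r < s := Finset.mem_range.mp hr
  have hax : 0 < x * (s:ℝ) := mul_pos hx0 hs'
  have hpx : 0 < (x * (s:ℝ)) ^ (s - r) := pow_pos hax _
  have hple : (x * (s:ℝ)) ^ (s - r) ≤ (y * (s:ℝ)) ^ (s - r) := by
    apply pow_le_pow_left₀ (le_of_lt hax)
    nlinarith
  have hnum : (1 - y) ^ 2 * ((Nat.factorial s : ℝ) / (Nat.factorial r : ℝ)) ≤
      (1 - x) ^ 2 * ((Nat.factorial s : ℝ) / (Nat.factorial r : ℝ)) := by
    have hFr : (0:ℝ) < Nat.factorial r := by positivity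
    have hF : (0:ℝ) < Nat.factorial s := by positivity
    have : (1 - y) ^ 2 ≤ (1 - x) ^ 2 := by nlinarith
    have hdiv : (0:ℝ) ≤ (Nat.factorial s : ℝ) / (Nat.factorial r : ℝ) := by positivity
    nlinarith
  apply div_le_div₀ (by positivity) hnum hpx hple

/-- For every integer `s ≥ 1` and every `μ > 0`, the function
`ρ ↦ W(ρ,s,μ)` is strictly increasing on the open interval `(0,1)`. -/
theorem Wtime_strictMonoOn (s : ℕ) (hs : 1 ≤ s) (μ : ℝ) (hμ : 0 < μ) :
    StrictMonoOn (fun ρ : ℝ => Wtime ρ s μ) (Set.Ioo (0 : ℝ) 1) := by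
  intro x hx y hy hxy
  simp only [Set.mem_Ioo] at hx hy
  have hs' : (0:ℝ) < s := by exact_mod_cast hs
  simp only []
  rw [Wtime_eq hs hx.1 hx.2 hμ, Wtime_eq hs hy.1 hy.2 hμ]
  have hGx := Gfun_pos hs hx.1 hx.2
  have hGy := Gfun_pos hs hy.1 hy.2
  have hG : Gfun y s < Gfun x s := Gfun_anti hs hx.1 hy.2 hxy
  have h1 : 0 < μ * (s:ℝ) * Gfun y s := by positivity
  have h2 : μ * (s:ℝ) * Gfun y s < μ * (s:ℝ) * Gfun x s := by
    apply mul_lt_mul_of_pos_left hG (by positivity)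
  have := one_div_lt_one_div_of_lt h1 h2
  linarith
end

section
/- For every integer s ≥ 1 and every μ > 0, the function ρ ↦ W(ρ,s,μ) is strictly convex on the open interval (0,1). -/
open Finset

namespace MMsAux

open Polynomial Set

/-- `d j = s! / (j! s^(s-j))`. -/
noncomputable def dd (s j : ℕ) : ℝ :=
  (Nat.factorial s : ℝ) / ((Nat.factorial j : ℝ) * (s : ℝ) ^ (s - j))

/-- `m j = (s-j) d j / s`, the coefficients of the denominator polynomial. -/
noncomputable def mm (s j : ℕ) : ℝ := ((s - j : ℕ) : ℝ) * dd s j / (s : ℝ)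

lemma dd_pos {s : ℕ} (hs : 1 ≤ s) (j : ℕ) : 0 < dd s j := by
  have h1 : (0:ℝ) < Nat.factorial s := by positivity
  have h2 : (0:ℝ) < Nat.factorial j := by positivity
  have h3 : (0:ℝ) < (s:ℝ) ^ (s - j) := by
    have : (0:ℝ) < (s:ℝ) := by exact_mod_cast hs
    positivity
  exact div_pos h1 (by positivity)

lemma mm_nonneg {s : ℕ} (hs : 1 ≤ s) (j : ℕ) : 0 ≤ mm s j := by
  have := dd_pos hs j
  have hσ : (0:ℝ) < (s:ℝ) := by exact_mod_cast hs
  unfold mm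
  positivity

lemma mm_eq_zero {s j : ℕ} (h : s ≤ j) : mm s j = 0 := by
  unfold mm
  rw [Nat.sub_eq_zero_of_le h]
  simp

lemma mm_eq {s j : ℕ} (h : j ≤ s) : mm s j = ((s:ℝ) - j) * dd s j / (s:ℝ) := by
  unfold mm
  rw [Nat.cast_sub h]

lemma dd_succ {s j : ℕ} (h : j < s) : dd s (j+1) = dd s j * (s:ℝ) / (j+1) := by
  have e : s - j = (s - (j+1)) + 1 := by omega
  have hσ : (0:ℝ) < (s:ℝ) := by exact_mod_cast Nat.one_le_iff_ne_zero.mpr (by omega)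
  have hj : (0:ℝ) < (Nat.factorial j : ℝ) := by positivity
  have hp : (0:ℝ) < (s:ℝ) ^ (s - (j+1)) := by positivity
  unfold dd
  rw [e, pow_succ, Nat.factorial_succ]
  push_cast
  field_simp

lemma mm_zero_pos {s : ℕ} (hs : 1 ≤ s) : 0 < mm s 0 := by
  have := dd_pos hs 0
  have hσ : (0:ℝ) < (s:ℝ) := by exact_mod_cast hs
  unfold mm
  simp only [Nat.sub_zero]
  positivity

/-- `m (j+1) = d (j+1) - d j` for `j+1 ≤ s`. -/
lemma mm_succ_eq {s j : ℕ} (h : j + 1 ≤ s) : mm s (j+1) = dd s (j+1) - dd s j := by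
  have hσ : (0:ℝ) < (s:ℝ) := by exact_mod_cast Nat.one_le_iff_ne_zero.mpr (by omega)
  have hd : dd s (j+1) = dd s j * (s:ℝ) / (j+1) := dd_succ (by omega)
  have hdj : dd s j = dd s (j+1) * ((j:ℝ)+1) / (s:ℝ) := by
    rw [hd]; field_simp
  rw [mm_eq h, hdj]
  have : ((j:ℝ)+1) ≠ 0 := by positivity
  field_simp
  push_cast
  ring

noncomputable def MP (s : ℕ) : Polynomial ℝ :=
  ∑ j ∈ Finset.range (s+1), Polynomial.C (mm s j) * Polynomial.X ^ j

noncomputable def PP (s : ℕ) : Polynomial ℝ :=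
  Polynomial.C (s:ℝ) * MP s - Polynomial.X * (MP s).derivative

noncomputable def EE (s : ℕ) : Polynomial ℝ :=
  Polynomial.C ((s:ℝ)*((s:ℝ)+1)) * MP s - Polynomial.C (2*(s:ℝ)) * (Polynomial.X * (MP s).derivative)
    + Polynomial.X^2 * (MP s).derivative.derivative

noncomputable def KK (s : ℕ) : Polynomial ℝ :=
  Polynomial.C 2 * (PP s)^2 - MP s * EE s

lemma mm_eq_zero' {s j : ℕ} (h : s ≤ j) : mm s j = 0 := by
  unfold mm; rw [Nat.sub_eq_zero_of_le h]; simp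

lemma MP_coeff (s : ℕ) (k : ℕ) : (MP s).coeff k = mm s k := by
  unfold MP
  rw [finset_sum_coeff]
  simp only [coeff_C_mul, coeff_X_pow]
  rcases lt_or_ge k (s+1) with hk | hk
  · rw [Finset.sum_eq_single k]
    · simp
    · intro b _ hb; simp [Ne.symm hb]
    · intro h; exact absurd (Finset.mem_range.mpr hk) h
  · rw [Finset.sum_eq_zero, mm_eq_zero' (by omega)]
    intro b hb
    have hbk : b ≠ k := by have := Finset.mem_range.mp hb; omega
    simp [hbk, Ne.symm hbk]

lemma MP_eval (s : ℕ) (x : ℝ) :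
    (MP s).eval x = ∑ j ∈ Finset.range (s+1), mm s j * x ^ j := by
  unfold MP
  rw [eval_finset_sum]
  simp

lemma PP_coeff (s : ℕ) (k : ℕ) : (PP s).coeff k = ((s:ℝ) - k) * mm s k := by
  unfold PP
  rw [coeff_sub, coeff_C_mul, MP_coeff]
  rcases k with _ | k
  · rw [mul_coeff_zero]; simp
  · rw [coeff_X_mul, coeff_derivative, MP_coeff]
    push_cast; ring

lemma EE_coeff (s : ℕ) (k : ℕ) :
    (EE s).coeff k = ((s:ℝ) - k) * ((s:ℝ) + 1 - k) * mm s k := by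
  unfold EE
  rw [coeff_add, coeff_sub, coeff_C_mul, coeff_C_mul, MP_coeff]
  have hX2 : (Polynomial.X^2 * (MP s).derivative.derivative).coeff k
      = (k:ℝ) * ((k:ℝ) - 1) * mm s k := by
    rcases k with _ | k
    · rw [show (Polynomial.X^2 : Polynomial ℝ) * (MP s).derivative.derivative
          = Polynomial.X * (Polynomial.X * (MP s).derivative.derivative) by ring]
      rw [mul_coeff_zero]; simp
    · rcases k with _ | k
      · rw [show (Polynomial.X^2 : Polynomial ℝ) * (MP s).derivative.derivative
            = Polynomial.X * (Polynomial.X * (MP s).derivative.derivative) by ring]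
        rw [coeff_X_mul, mul_coeff_zero]; simp
      · rw [show (Polynomial.X^2 : Polynomial ℝ) * (MP s).derivative.derivative
            = Polynomial.X * (Polynomial.X * (MP s).derivative.derivative) by ring]
        rw [coeff_X_mul, coeff_X_mul, coeff_derivative, coeff_derivative, MP_coeff]
        push_cast; ring
  rw [hX2]
  rcases k with _ | k
  · rw [mul_coeff_zero]; simp
  · rw [coeff_X_mul, coeff_derivative, MP_coeff]
    push_cast; ring

lemma KK_coeff (s : ℕ) (n : ℕ) :
    (KK s).coeff n = ∑ i ∈ Finset.range (n+1),
      (2 * (((s:ℝ) - i) * mm s i) * (((s:ℝ) - (n-i : ℕ)) * mm s (n-i))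
        - mm s i * (((s:ℝ) - (n-i:ℕ)) * ((s:ℝ) + 1 - (n-i:ℕ)) * mm s (n-i))) := by
  unfold KK
  rw [coeff_sub, coeff_C_mul, pow_two, coeff_mul, coeff_mul,
    Finset.Nat.sum_antidiagonal_eq_sum_range_succ_mk,
    Finset.Nat.sum_antidiagonal_eq_sum_range_succ_mk,
    Finset.mul_sum, ← Finset.sum_sub_distrib]
  refine Finset.sum_congr rfl fun i _ => ?_
  rw [PP_coeff, PP_coeff, MP_coeff, EE_coeff]
  ring

/-- The key alternative form of `KK` used in the second-derivative computation. -/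
lemma KK_alt (s : ℕ) :
    Polynomial.C ((s:ℝ) - 1) * PP s * MP s + Polynomial.X * (PP s).derivative * MP s
      - Polynomial.C 2 * Polynomial.X * PP s * (MP s).derivative = KK s := by
  unfold KK PP EE
  have h1 : (Polynomial.C ((s:ℝ) - 1) : Polynomial ℝ) = Polynomial.C (s:ℝ) - 1 := by
    rw [map_sub, map_one]
  have h2 : (Polynomial.C ((s:ℝ)*((s:ℝ)+1)) : Polynomial ℝ)
      = Polynomial.C (s:ℝ) * (Polynomial.C (s:ℝ) + 1) := by
    rw [map_mul, map_add, map_one]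
  have h3 : (Polynomial.C (2*(s:ℝ)) : Polynomial ℝ) = Polynomial.C 2 * Polynomial.C (s:ℝ) := by
    rw [map_mul]
  have h4 : (Polynomial.C (2:ℝ)) = (2 : Polynomial ℝ) := by
    exact map_ofNat Polynomial.C 2
  rw [h1, h2, h3, h4, derivative_sub, derivative_C_mul, derivative_mul, derivative_X]
  ring

section Sums

lemma sum_range_cast (k : ℕ) : ∑ i ∈ Finset.range k, (i:ℝ) = k*((k:ℝ)-1)/2 := by
  induction k with
  | zero => simp
  | succ k ih => rw [Finset.sum_range_succ, ih]; push_cast; ring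

lemma sum_range_sq (k : ℕ) : ∑ i ∈ Finset.range k, (i:ℝ)^2 = k*((k:ℝ)-1)*(2*k-1)/6 := by
  induction k with
  | zero => simp
  | succ k ih => rw [Finset.sum_range_succ, ih]; push_cast; ring

lemma sum_Icc_cast {a b : ℕ} (h : a ≤ b + 1) :
    ∑ i ∈ Finset.Icc a b, (i:ℝ) = ((b:ℝ)+1)*b/2 - (a:ℝ)*((a:ℝ)-1)/2 := by
  rw [← Finset.Ico_add_one_right_eq_Icc, Finset.sum_Ico_eq_sub _ h, sum_range_cast, sum_range_cast]
  push_cast; ring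

lemma sum_Icc_sq {a b : ℕ} (h : a ≤ b + 1) :
    ∑ i ∈ Finset.Icc a b, (i:ℝ)^2
      = ((b:ℝ)+1)*b*(2*b+1)/6 - (a:ℝ)*((a:ℝ)-1)*(2*a-1)/6 := by
  rw [← Finset.Ico_add_one_right_eq_Icc, Finset.sum_Ico_eq_sub _ h, sum_range_sq, sum_range_sq]
  push_cast; ring

/-- The exact evaluation of the sum of `φ` over the symmetric interval. -/
lemma sum_phi_eq {a b n : ℕ} (s : ℕ) (hab : a + b = n) (h : a ≤ b) :
    6 * ∑ i ∈ Finset.Icc a b, ((s:ℝ) - i) * ((s:ℝ) - n + i)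
      = ((b:ℝ) - a + 1) * ((2*(s:ℝ)-n)*(2*(s:ℝ)-n+1))
        + 2*((s:ℝ)-1-b)*((s:ℝ)-a)*((b:ℝ)-a+1) := by
  have hn : (n:ℝ) = (a:ℝ) + b := by exact_mod_cast congrArg (Nat.cast (R := ℝ)) hab.symm
  have hcard : ((Finset.Icc a b).card : ℝ) = (b:ℝ) + 1 - a := by
    rw [Nat.card_Icc]
    have : a ≤ b + 1 := by omega
    push_cast [Nat.cast_sub this]; ring
  have expand : ∀ i ∈ Finset.Icc a b,
      ((s:ℝ) - i) * ((s:ℝ) - n + i)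
        = ((s:ℝ)^2 - (s:ℝ)*n) + (n:ℝ)*i - (i:ℝ)^2 := by
    intro i _; ring
  rw [Finset.sum_congr rfl expand]
  rw [Finset.sum_sub_distrib, Finset.sum_add_distrib, Finset.sum_const,
    ← Finset.mul_sum, sum_Icc_cast (by omega), sum_Icc_sq (by omega), nsmul_eq_mul, hcard, hn]
  ring

end Sums

section Unimodal

variable {s n : ℕ}

/-- `u i = d i * d (n-i)`; symmetric and unimodal on the relevant range. -/
noncomputable def uu (s n i : ℕ) : ℝ := dd s i * dd s (n - i)

lemma uu_pos (hs : 1 ≤ s) (i : ℕ) : 0 < uu s n i := mul_pos (dd_pos hs _) (dd_pos hs _)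

lemma uu_symm (hs : 1 ≤ s) {k : ℕ} (hk : k ≤ n) : uu s n (n - k) = uu s n k := by
  unfold uu
  rw [Nat.sub_sub_self hk, mul_comm]

lemma uu_step (hs : 1 ≤ s) {i : ℕ} (h1 : 2*i+1 ≤ n) (h2 : i+1 ≤ s) (h3 : n - i ≤ s) :
    uu s n i ≤ uu s n (i+1) := by
  have hσ : (0:ℝ) < (s:ℝ) := by exact_mod_cast hs
  have hi1 : i + 1 ≤ n - i := by omega
  have hni : 1 ≤ n - i := by omega
  have e1 : dd s (i+1) = dd s i * (s:ℝ) / (i+1) := dd_succ (by omega)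
  have e2 : dd s (n-i) = dd s (n-i-1) * (s:ℝ) / ((n-i:ℕ):ℝ) := by
    have := dd_succ (s := s) (j := n-i-1) (by omega)
    rw [show n-i-1+1 = n-i from by omega] at this
    rw [this]
    congr 1
    push_cast [Nat.cast_sub (by omega : 1 ≤ n - i)]
    ring
  have e2' : dd s (n-i-1) = dd s (n-i) * ((n-i:ℕ):ℝ) / (s:ℝ) := by
    rw [e2]
    have hnn : (0:ℝ) < ((n-i:ℕ):ℝ) := by exact_mod_cast hni
    field_simp
  have key : uu s n (i+1) = uu s n i * (((n-i:ℕ):ℝ)/((i:ℝ)+1)) := by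
    unfold uu
    rw [show n-(i+1) = n-i-1 from by omega, e1, e2']
    field_simp
  rw [key]
  have hfrac : 1 ≤ ((n-i:ℕ):ℝ)/((i:ℝ)+1) := by
    rw [le_div_iff₀ (by positivity)]
    have : ((i:ℝ)+1) ≤ ((n-i:ℕ):ℝ) := by exact_mod_cast hi1
    linarith
  nlinarith [uu_pos (n := n) hs i]

lemma uu_chain (hs : 1 ≤ s) {i j : ℕ} (hij : i ≤ j) (hj : 2*j ≤ n) (hjs : j ≤ s)
    (hni : n - i ≤ s) : uu s n i ≤ uu s n j := by
  obtain ⟨t, rfl⟩ := Nat.exists_eq_add_of_le hij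
  clear hij
  induction t with
  | zero => simp
  | succ t ih =>
    have h1 : uu s n i ≤ uu s n (i + t) := ih (by omega) (by omega)
    have h2 : uu s n (i+t) ≤ uu s n (i+t+1) :=
      uu_step hs (by omega) (by omega) (by omega)
    calc uu s n i ≤ uu s n (i+t) := h1
      _ ≤ uu s n (i + (t+1)) := by rw [show i + (t+1) = i+t+1 from by omega]; exact h2

/-- The key comparison: on the symmetric range, `u` monovaries with `φ`. -/
lemma uu_cmp (hs : 1 ≤ s) {a b i j : ℕ} (hbs : b ≤ s - 1) (hbn : b ≤ n) (hab : a + b = n)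
    (hia : a ≤ i) (hib : i ≤ b) (hja : a ≤ j) (hjb : j ≤ b)
    (hφ : ((s:ℝ)-i)*((s:ℝ)-n+i) < ((s:ℝ)-j)*((s:ℝ)-n+j)) : uu s n i ≤ uu s n j := by
  set i' := min i (n - i) with hi'
  set j' := min j (n - j) with hj'
  have hin : i ≤ n := by omega
  have hjn : j ≤ n := by omega
  have h2i : 2*i' ≤ n := by omega
  have h2j : 2*j' ≤ n := by omega
  have hui : uu s n i' = uu s n i := by
    rcases min_cases i (n-i) with ⟨h, _⟩ | ⟨h, _⟩
    · rw [hi', h]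
    · rw [hi', h, uu_symm hs (by omega)]
  have huj : uu s n j' = uu s n j := by
    rcases min_cases j (n-j) with ⟨h, _⟩ | ⟨h, _⟩
    · rw [hj', h]
    · rw [hj', h, uu_symm hs (by omega)]
  -- square comparison
  have hsqij : ((n:ℝ)-2*j)^2 < ((n:ℝ)-2*i)^2 := by nlinarith [hφ]
  have hci : ((n:ℝ)-2*i')^2 = ((n:ℝ)-2*i)^2 := by
    rcases min_cases i (n-i) with ⟨h, _⟩ | ⟨h, hle⟩
    · rw [hi', h]
    · rw [hi', h]
      have : ((n - i : ℕ):ℝ) = (n:ℝ) - i := Nat.cast_sub hin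
      rw [this]; ring
  have hcj : ((n:ℝ)-2*j')^2 = ((n:ℝ)-2*j)^2 := by
    rcases min_cases j (n-j) with ⟨h, _⟩ | ⟨h, hle⟩
    · rw [hj', h]
    · rw [hj', h]
      have : ((n - j : ℕ):ℝ) = (n:ℝ) - j := Nat.cast_sub hjn
      rw [this]; ring
  have hposi : (0:ℝ) ≤ (n:ℝ)-2*i' := by
    have : (2*i' : ℕ) ≤ n := h2i
    have h := (Nat.cast_le (α := ℝ)).mpr this
    push_cast at h; linarith
  have hposj : (0:ℝ) ≤ (n:ℝ)-2*j' := by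
    have : (2*j' : ℕ) ≤ n := h2j
    have h := (Nat.cast_le (α := ℝ)).mpr this
    push_cast at h; linarith
  have hlt : (n:ℝ)-2*j' < (n:ℝ)-2*i' := by nlinarith [hci, hcj, hsqij, hposi, hposj]
  have hij' : i' < j' := by
    have : (2*j' :ℝ) > 2*i' := by linarith
    have : (j':ℝ) > i' := by linarith
    exact_mod_cast this
  have hnj : n - j ≤ b := by omega
  have hnii : n - i ≤ b := by omega
  exact hui ▸ huj ▸ uu_chain hs (le_of_lt hij') (by omega)
    (by omega) (by omega)

end Unimodal

theorem KK_coeff_nonneg {s : ℕ} (hs : 1 ≤ s) (n : ℕ) : 0 ≤ (KK s).coeff n := by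
  classical
  set σ : ℝ := (s:ℝ) with hσdef
  -- weight and phi functions
  set w : ℕ → ℝ := fun i => mm s i * mm s (n - i) with hw
  set φ : ℕ → ℝ := fun i => (σ - i) * (σ - n + i) with hφdef
  set A : ℕ → ℝ := fun i => (2*(σ - i)*(σ - n + i) - (σ - n + i)*(σ - n + i + 1)) * w i
    with hA
  have hKA : (KK s).coeff n = ∑ i ∈ Finset.range (n+1), A i := by
    rw [KK_coeff]
    refine Finset.sum_congr rfl fun i hi => ?_
    have hin : i ≤ n := by have := Finset.mem_range.mp hi; omega
    have hc : ((n - i : ℕ):ℝ) = (n:ℝ) - i := Nat.cast_sub hin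
    simp only [hA, hw, hc]
    ring
  -- symmetrize
  have hrefl : ∑ i ∈ Finset.range (n+1), A (n - i) = ∑ i ∈ Finset.range (n+1), A i := by
    have := Finset.sum_range_reflect A (n+1)
    simpa using this
  have hsym : 2 * ∑ i ∈ Finset.range (n+1), A i
      = ∑ i ∈ Finset.range (n+1), w i * (6 * φ i - (2*σ-n)*(2*σ-n+1)) := by
    rw [two_mul]
    nth_rewrite 1 [← hrefl]
    rw [← Finset.sum_add_distrib]
    refine Finset.sum_congr rfl fun i hi => ?_
    have hin : i ≤ n := by have := Finset.mem_range.mp hi; omega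
    have hc : ((n - i : ℕ):ℝ) = (n:ℝ) - i := Nat.cast_sub hin
    have hcc : n - (n - i) = i := Nat.sub_sub_self hin
    simp only [hA, hw, hφdef, hc, hcc]
    ring
  -- the per-fiber inequality
  have key : 0 ≤ ∑ i ∈ Finset.range (n+1), w i * (6 * φ i - (2*σ-n)*(2*σ-n+1)) := by
    set b : ℕ := min (s-1) n with hb
    set a : ℕ := n - b with ha
    have hbn : b ≤ n := by omega
    have hsub : Finset.Icc a b ⊆ Finset.range (n+1) := by
      intro i hi
      have := Finset.mem_Icc.mp hi
      exact Finset.mem_range.mpr (by omega)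
    have hvanish : ∀ i ∈ Finset.range (n+1), i ∉ Finset.Icc a b →
        w i * (6 * φ i - (2*σ-n)*(2*σ-n+1)) = 0 := by
      intro i hi hni
      have hin : i ≤ n := by have := Finset.mem_range.mp hi; omega
      have : i < a ∨ b < i := by
        rcases Finset.mem_Icc.not.mp hni with h
        omega
      have hw0 : w i = 0 := by
        rcases this with h | h
        ·
          have : s ≤ n - i := by omega
          simp only [hw]
          rw [mm_eq_zero this, mul_zero]
        · have : s ≤ i := by omega
          simp only [hw]
          rw [mm_eq_zero this, zero_mul]
      rw [hw0, zero_mul]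
    rw [← Finset.sum_subset hsub hvanish]
    rcases Nat.lt_or_ge b a with hba | hab
    · rw [Finset.Icc_eq_empty (by omega)]
      simp
    · -- the Chebyshev argument
      have habn : a + b = n := by omega
      have hbs1 : b ≤ s - 1 := by omega
      -- positivity facts on the interval
      have hIccmem : ∀ i ∈ Finset.Icc a b, i ≤ s - 1 ∧ n - i ≤ s - 1 ∧ i ≤ n ∧ a ≤ n - i ∧ n - i ≤ b := by
        intro i hi
        have := Finset.mem_Icc.mp hi
        constructor; · omega
        constructor; · omega
        constructor; · omega
        constructor; · omega
        omega
      have hφpos : ∀ i ∈ Finset.Icc a b, 1 ≤ φ i := by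
        intro i hi
        obtain ⟨h1, h2, h3, _, _⟩ := hIccmem i hi
        have c1 : (i:ℝ) ≤ (s:ℝ) - 1 := by
          have : (i:ℝ) ≤ ((s-1:ℕ):ℝ) := by exact_mod_cast h1
          rw [Nat.cast_sub hs] at this; push_cast at this; linarith
        have c2 : (n:ℝ) - i ≤ (s:ℝ) - 1 := by
          have : ((n-i:ℕ):ℝ) ≤ ((s-1:ℕ):ℝ) := by exact_mod_cast h2
          rw [Nat.cast_sub hs, Nat.cast_sub h3] at this; push_cast at this; linarith
        simp only [hφdef, hσdef]
        nlinarith [c1, c2]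
      have hweq : ∀ i ∈ Finset.Icc a b, w i = φ i * uu s n i / σ^2 := by
        intro i hi
        obtain ⟨h1, h2, h3, _, _⟩ := hIccmem i hi
        have hi_s : i ≤ s := by omega
        have hni_s : n - i ≤ s := by omega
        simp only [hw, hφdef, hσdef]
        rw [mm_eq hi_s, mm_eq hni_s, Nat.cast_sub h3]
        unfold uu
        have hσ0 : (s:ℝ) ≠ 0 := by positivity
        field_simp
        ring
      have hmono : MonovaryOn w φ (Finset.Icc a b : Finset ℕ) := by
        intro i hi j hj hij
        simp only [Finset.coe_Icc, Set.mem_Icc] at hi hj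
        have hweqi := hweq i (Finset.mem_Icc.mpr hi)
        have hweqj := hweq j (Finset.mem_Icc.mpr hj)
        have hu : uu s n i ≤ uu s n j :=
          uu_cmp hs hbs1 hbn habn hi.1 hi.2 hj.1 hj.2 (by simpa [hφdef, hσdef] using hij)
        have hφi : 1 ≤ φ i := hφpos i (Finset.mem_Icc.mpr hi)
        have hui : 0 < uu s n i := uu_pos hs i
        have huj : 0 < uu s n j := uu_pos hs j
        rw [hweqi, hweqj]
        have hσ2 : (0:ℝ) < σ^2 := by
          have : (0:ℝ) < σ := by simp only [hσdef]; exact_mod_cast hs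
          positivity
        have hmain : φ i * uu s n i ≤ φ j * uu s n j :=
          mul_le_mul (le_of_lt hij) hu (le_of_lt hui) (by linarith)
        exact (div_le_div_iff_of_pos_right hσ2).mpr hmain
      -- Chebyshev's sum inequality
      have hcheb := hmono.sum_mul_sum_le_card_mul_sum
      set c : ℝ := ((Finset.Icc a b).card : ℝ) with hcdef
      have hc : c = (b:ℝ) - a + 1 := by
        rw [hcdef, Nat.card_Icc]
        have h1 : a ≤ b + 1 := by omega
        push_cast [Nat.cast_sub h1]
        ring
      have hcpos : (0:ℝ) < c := by
        rw [hc]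
        have : (a:ℝ) ≤ (b:ℝ) := by exact_mod_cast hab
        linarith
      set Sw : ℝ := ∑ i ∈ Finset.Icc a b, w i with hSw
      set Sφ : ℝ := ∑ i ∈ Finset.Icc a b, φ i with hSφ
      set Swφ : ℝ := ∑ i ∈ Finset.Icc a b, w i * φ i with hSwφ
      have hsw : 0 ≤ Sw := Finset.sum_nonneg fun i _ =>
        mul_nonneg (mm_nonneg hs i) (mm_nonneg hs (n - i))
      have hf1 : (0:ℝ) ≤ σ - 1 - b := by
        have : ((b:ℕ):ℝ) ≤ ((s-1:ℕ):ℝ) := by exact_mod_cast hbs1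
        rw [Nat.cast_sub hs] at this
        push_cast at this
        simp only [hσdef]
        linarith
      have hf2 : (0:ℝ) ≤ σ - a := by
        have h1 : a ≤ s - 1 := by omega
        have : ((a:ℕ):ℝ) ≤ ((s-1:ℕ):ℝ) := by exact_mod_cast h1
        rw [Nat.cast_sub hs] at this
        push_cast at this
        simp only [hσdef]
        linarith
      have hphi' : 6*Sφ = c*((2*σ-n)*(2*σ-n+1)) + 2*(σ-1-b)*(σ-a)*c := by
        have := sum_phi_eq (a := a) (b := b) (n := n) s habn hab
        rw [hSφ, hc]
        simp only [hφdef, hσdef]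
        rw [this]
      have h1 : Sw*(c*((2*σ-n)*(2*σ-n+1))) ≤ Sw*(6*Sφ) := by
        rw [hphi']
        nlinarith [mul_nonneg hsw (mul_nonneg (mul_nonneg (mul_nonneg (by norm_num : (0:ℝ) ≤ 2) hf1) hf2) hcpos.le)]
      have h2 : Sw*(6*Sφ) ≤ c*(6*Swφ) := by
        calc Sw*(6*Sφ) = 6*(Sw*Sφ) := by ring
          _ ≤ 6*(c*Swφ) := by linarith [hcheb]
          _ = c*(6*Swφ) := by ring
      have hX : 0 ≤ c * (6*Swφ - (2*σ-n)*(2*σ-n+1)*Sw) := by nlinarith [le_trans h1 h2]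
      have hfinal : 0 ≤ 6*Swφ - (2*σ-n)*(2*σ-n+1)*Sw := by
        have := le_of_mul_le_mul_left (by linarith [hX] : c * 0 ≤ c * (6*Swφ - (2*σ-n)*(2*σ-n+1)*Sw)) hcpos
        linarith
      have hexp : ∑ i ∈ Finset.Icc a b, w i * (6 * φ i - (2*σ-n)*(2*σ-n+1))
          = 6*Swφ - (2*σ-n)*(2*σ-n+1)*Sw := by
        rw [hSwφ, hSw, Finset.mul_sum, Finset.mul_sum, ← Finset.sum_sub_distrib]
        refine Finset.sum_congr rfl fun i _ => ?_
        ring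
      rw [hexp]
      exact hfinal
  linarith [hsym, key, hKA]

lemma KK_eval_nonneg {s : ℕ} (hs : 1 ≤ s) {x : ℝ} (hx : 0 ≤ x) : 0 ≤ (KK s).eval x := by
  rw [Polynomial.eval_eq_sum_range]
  exact Finset.sum_nonneg fun i _ => mul_nonneg (KK_coeff_nonneg hs i) (pow_nonneg hx i)

lemma MP_eval_pos {s : ℕ} (hs : 1 ≤ s) {x : ℝ} (hx : 0 ≤ x) : 0 < (MP s).eval x := by
  rw [MP_eval]
  have h0 : ∀ j ∈ Finset.range (s+1), 0 ≤ mm s j * x ^ j :=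
    fun j _ => mul_nonneg (mm_nonneg hs j) (pow_nonneg hx j)
  have hmem : 0 ∈ Finset.range (s+1) := Finset.mem_range.mpr (by omega)
  calc (0:ℝ) < mm s 0 * x ^ 0 := by simpa using mm_zero_pos hs
    _ ≤ ∑ j ∈ Finset.range (s+1), mm s j * x ^ j :=
      Finset.single_le_sum h0 hmem

/-- The Erlang-C function `C(ρ) = ρ^s / M(ρ)`. -/
noncomputable def Fc (s : ℕ) : ℝ → ℝ := fun x => x ^ s / (MP s).eval x

noncomputable def Fc1 (s : ℕ) : ℝ → ℝ :=
  fun x => x ^ (s-1) * (PP s).eval x / ((MP s).eval x) ^ 2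

noncomputable def Fc2 (s : ℕ) : ℝ → ℝ :=
  fun x => x ^ (s-2) * (KK s).eval x / ((MP s).eval x) ^ 3

lemma PP_eval (s : ℕ) (x : ℝ) :
    (PP s).eval x = (s:ℝ) * (MP s).eval x - x * ((MP s).derivative).eval x := by
  unfold PP; simp

lemma hasDerivAt_Fc {s : ℕ} (hs : 1 ≤ s) {x : ℝ} (hx : 0 < x) :
    HasDerivAt (Fc s) (Fc1 s x) x := by
  have hM : (MP s).eval x ≠ 0 := ne_of_gt (MP_eval_pos hs hx.le)
  have h := (hasDerivAt_pow s x).div (Polynomial.hasDerivAt (MP s) x) hM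
  convert h using 1
  · rfl
  · rfl
  · rfl
  unfold Fc1
  rw [PP_eval]
  have hxs : x ^ s = x ^ (s-1) * x := by
    conv_lhs => rw [show s = (s-1)+1 by omega]
    rw [pow_succ]
  rw [hxs]
  field_simp

lemma hasDerivAt_Fc1 {s : ℕ} (hs : 2 ≤ s) {x : ℝ} (hx : 0 < x) :
    HasDerivAt (Fc1 s) (Fc2 s x) x := by
  have hMpos := MP_eval_pos (by omega : 1 ≤ s) hx.le
  have hM : (MP s).eval x ≠ 0 := ne_of_gt hMpos
  have hM2 : ((MP s).eval x) ^ 2 ≠ 0 := pow_ne_zero _ hM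
  have hu : HasDerivAt (fun y => y ^ (s-1) * (PP s).eval y)
      ((((s-1:ℕ):ℝ)) * x ^ (s-1-1) * (PP s).eval x
        + x ^ (s-1) * ((PP s).derivative).eval x) x :=
    (hasDerivAt_pow (s-1) x).mul (Polynomial.hasDerivAt (PP s) x)
  have hv : HasDerivAt (fun y => ((MP s).eval y) ^ 2)
      (2 * ((MP s).eval x) ^ 1 * ((MP s).derivative).eval x) x := by
    have := (Polynomial.hasDerivAt (MP s) x).pow 2
    convert this using 1
    · rfl
    · rfl
    · rfl
    · simp
  have h := hu.div hv hM2
  convert h using 1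
  · rfl
  · rfl
  · rfl
  unfold Fc2
  -- the evaluated key identity
  have hKev : (KK s).eval x
      = ((s:ℝ) - 1) * (PP s).eval x * (MP s).eval x
        + x * ((PP s).derivative).eval x * (MP s).eval x
        - 2 * x * (PP s).eval x * ((MP s).derivative).eval x := by
    rw [← KK_alt]; simp
  have hc1 : ((s-1:ℕ):ℝ) = (s:ℝ) - 1 := by
    push_cast [Nat.cast_sub (by omega : 1 ≤ s)]; ring
  have hx1 : x ^ (s-1) = x ^ (s-2) * x := by
    conv_lhs => rw [show s-1 = (s-2)+1 by omega]
    rw [pow_succ]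
  have hx2 : s - 1 - 1 = s - 2 := by omega
  rw [hKev, hc1, hx1, hx2]
  field_simp

lemma convexOn_Fc {s : ℕ} (hs : 1 ≤ s) : ConvexOn ℝ (Set.Ioo (0:ℝ) 1) (Fc s) := by
  rcases eq_or_lt_of_le hs with rfl | hs2
  · -- s = 1 : Fc is the identity
    have hM1 : ∀ t : ℝ, (MP 1).eval t = 1 := by
      intro t
      rw [MP_eval]
      have h0 : mm 1 0 = 1 := by
        unfold mm dd
        norm_num [Nat.factorial]
      have h1 : mm 1 1 = 0 := by
        unfold mm; norm_num
      rw [show (1:ℕ)+1 = 2 from rfl]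
      rw [Finset.sum_range_succ, Finset.sum_range_succ]
      simp [h0, h1]
    refine ⟨convex_Ioo 0 1, fun x hx y hy a b ha hb hab => ?_⟩
    simp only [Fc, hM1, smul_eq_mul, div_one, pow_one]
    exact le_refl _
  · have hs2' : 2 ≤ s := hs2
    refine convexOn_of_hasDerivWithinAt2_nonneg (f' := Fc1 s) (f'' := Fc2 s)
      (convex_Ioo 0 1) ?_ ?_ ?_ ?_
    · intro x hx
      exact (hasDerivAt_Fc hs hx.1).continuousAt.continuousWithinAt
    · intro x hx
      rw [interior_Ioo] at hx
      exact ((hasDerivAt_Fc hs hx.1).hasDerivWithinAt)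
    · intro x hx
      rw [interior_Ioo] at hx
      exact ((hasDerivAt_Fc1 hs2' hx.1).hasDerivWithinAt)
    · intro x hx
      rw [interior_Ioo] at hx
      have hMpos := MP_eval_pos hs hx.1.le
      unfold Fc2
      have h1 : (0:ℝ) ≤ x ^ (s-2) := pow_nonneg hx.1.le _
      have h2 := KK_eval_nonneg hs hx.1.le
      positivity

lemma monotoneOn_Fc {s : ℕ} (hs : 1 ≤ s) : MonotoneOn (Fc s) (Set.Ioo (0:ℝ) 1) := by
  intro x hx y hy hxy
  have hMx := MP_eval_pos hs hx.1.le
  have hMy := MP_eval_pos hs hy.1.le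
  unfold Fc
  rw [div_le_div_iff₀ hMx hMy]
  rw [MP_eval, MP_eval, Finset.mul_sum, Finset.mul_sum]
  refine Finset.sum_le_sum fun j hj => ?_
  have hjs : j ≤ s := by have := Finset.mem_range.mp hj; omega
  have hxs : x ^ s = x ^ j * x ^ (s-j) := by
    rw [← pow_add]; congr 1; omega
  have hys : y ^ s = y ^ j * y ^ (s-j) := by
    rw [← pow_add]; congr 1; omega
  have hpow : x ^ (s-j) ≤ y ^ (s-j) := pow_le_pow_left₀ hx.1.le hxy _
  have h1 : (0:ℝ) ≤ mm s j * (x^j * y^j) :=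
    mul_nonneg (mm_nonneg hs j) (mul_nonneg (pow_nonneg hx.1.le j) (pow_nonneg hy.1.le j))
  calc x ^ s * (mm s j * y ^ j) = (mm s j * (x^j * y^j)) * x^(s-j) := by rw [hxs]; ring
    _ ≤ (mm s j * (x^j * y^j)) * y^(s-j) := mul_le_mul_of_nonneg_left hpow h1
    _ = y ^ s * (mm s j * x ^ j) := by rw [hys]; ring

lemma Fc_pos {s : ℕ} (hs : 1 ≤ s) {x : ℝ} (hx : x ∈ Set.Ioo (0:ℝ) 1) : 0 < Fc s x :=
  div_pos (pow_pos hx.1 s) (MP_eval_pos hs hx.1.le)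

/-- The split form of the denominator polynomial. -/
lemma MP_eval_split {s : ℕ} (hs : 1 ≤ s) (ρ : ℝ) :
    (MP s).eval ρ = ρ^s + (1-ρ) * ∑ r ∈ Finset.range s, dd s r * ρ^r := by
  have hσ : (0:ℝ) < (s:ℝ) := by exact_mod_cast hs
  rw [MP_eval, Finset.sum_range_succ']
  have h0 : mm s 0 * ρ^0 = dd s 0 * ρ^0 := by
    unfold mm; rw [Nat.sub_zero]; field_simp
  have hstep : ∀ i ∈ Finset.range s, mm s (i+1) * ρ^(i+1)
      = dd s (i+1)*ρ^(i+1) - ρ*(dd s i * ρ^i) := by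
    intro i hi
    have hi' : i + 1 ≤ s := by have := Finset.mem_range.mp hi; omega
    rw [mm_succ_eq hi', pow_succ]
    ring
  rw [Finset.sum_congr rfl hstep, Finset.sum_sub_distrib, h0]
  have hshift := Finset.sum_range_succ' (fun j => dd s j * ρ^j) s
  have htop := Finset.sum_range_succ (fun j => dd s j * ρ^j) s
  have hdss : dd s s = 1 := by
    unfold dd
    rw [Nat.sub_self, pow_zero]
    field_simp
  have hmulsum : ∑ i ∈ Finset.range s, ρ*(dd s i * ρ^i)
      = ρ * ∑ i ∈ Finset.range s, dd s i * ρ^i := by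
    rw [Finset.mul_sum]
  rw [hmulsum]
  have : ∑ i ∈ Finset.range s, dd s (i+1) * ρ^(i+1)
      = (∑ j ∈ Finset.range s, dd s j * ρ^j) + ρ^s - dd s 0 * ρ^0 := by
    rw [hdss] at htop
    linarith [hshift, htop]
  rw [this]
  ring

/-- `ErlangP` agrees with `ρ^s / M(ρ)` on `(0,1)`. -/
lemma ErlangP_eq {s : ℕ} (hs : 1 ≤ s) {ρ : ℝ} (hρ : ρ ∈ Set.Ioo (0:ℝ) 1) :
    ErlangP ρ s = Fc s ρ := by
  have hρ0 : 0 < ρ := hρ.1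
  have h1ρ : 0 < 1 - ρ := by linarith [hρ.2]
  have hσ : (0:ℝ) < (s:ℝ) := by exact_mod_cast hs
  have hfac : (0:ℝ) < (Nat.factorial s : ℝ) := by positivity
  have hρs : 0 < ρ * (s:ℝ) := by positivity
  have hT1 : 0 < T1 ρ s := by
    unfold T1; positivity
  have hT2 : 0 < T2 ρ s := by
    unfold T2
    refine Finset.sum_pos (fun r _ => by positivity) ⟨0, Finset.mem_range.mpr (by omega)⟩
  have hM := MP_eval_pos hs hρ0.le
  have hden : (1 - ρ) * (Nat.factorial s : ℝ) * (T1 ρ s + T2 ρ s) ≠ 0 := by positivity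
  unfold ErlangP Fc
  rw [div_eq_div_iff hden (ne_of_gt hM)]
  rw [MP_eval_split hs]
  have hsum : (s:ℝ)^s * ∑ r ∈ Finset.range s, dd s r * ρ^r
      = (Nat.factorial s : ℝ) * T2 ρ s := by
    unfold T2
    rw [Finset.mul_sum, Finset.mul_sum]
    refine Finset.sum_congr rfl fun r hr => ?_
    have hrs : r ≤ s := by have := Finset.mem_range.mp hr; omega
    have hfr : (0:ℝ) < (Nat.factorial r : ℝ) := by positivity
    have hpow : (s:ℝ)^(s-r) * (s:ℝ)^r = (s:ℝ)^s := by
      rw [← pow_add]; congr 1; omega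
    unfold dd
    rw [mul_pow]
    field_simp
    linear_combination (-1:ℝ)*hpow
  have hT1' : (1-ρ)*(Nat.factorial s : ℝ)*T1 ρ s = ρ^s * (s:ℝ)^s := by
    unfold T1
    rw [mul_pow]
    field_simp
  rw [mul_pow]
  linear_combination ρ^s*(1-ρ)*hsum - ρ^s*hT1'

noncomputable def gg : ℝ → ℝ := fun x => (1 - x)⁻¹

lemma gg_pos {x : ℝ} (hx : x ∈ Set.Ioo (0:ℝ) 1) : 0 < gg x :=
  inv_pos.mpr (by linarith [hx.2])

lemma gg_mono : MonotoneOn gg (Set.Ioo (0:ℝ) 1) := by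
  intro x hx y hy hxy
  have h1 : (0:ℝ) < 1 - y := by linarith [hy.2]
  have h2 : (0:ℝ) < 1 - x := by linarith [hx.2]
  unfold gg
  rw [inv_eq_one_div, inv_eq_one_div]
  exact one_div_le_one_div_of_le h1 (by linarith)

lemma gg_strictConvexOn : StrictConvexOn ℝ (Set.Ioo (0:ℝ) 1) gg := by
  refine ⟨convex_Ioo 0 1, fun x hx y hy hxy a b ha hb hab => ?_⟩
  simp only [smul_eq_mul, gg]
  have hu : (0:ℝ) < 1 - x := by linarith [hx.2]
  have hv : (0:ℝ) < 1 - y := by linarith [hy.2]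
  have hne : (1 - x) ≠ (1 - y) := fun h => hxy (by linarith)
  have h : (1:ℝ) - (a*x + b*y) = a*(1-x) + b*(1-y) := by linear_combination -hab
  rw [h]
  set u : ℝ := 1 - x with hudef
  set v : ℝ := 1 - y with hvdef
  have huv : 0 < a*u + b*v := by
    have := mul_pos ha hu
    have := mul_pos hb hv
    linarith
  rw [inv_eq_one_div, div_lt_iff₀ huv]
  have e1 : u⁻¹ * u = 1 := inv_mul_cancel₀ (ne_of_gt hu)
  have e2 : v⁻¹ * v = 1 := inv_mul_cancel₀ (ne_of_gt hv)
  have hsq : (0:ℝ) < (u - v)^2 := by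
    have h0 : (0:ℝ) ≤ (u-v)^2 := sq_nonneg _
    have hne2 : (u-v)^2 ≠ 0 := pow_ne_zero _ (sub_ne_zero.mpr hne)
    exact lt_of_le_of_ne h0 (Ne.symm hne2)
  have key : u⁻¹*v + v⁻¹*u - 2 = (u-v)^2 * (u⁻¹*v⁻¹) := by
    field_simp
    ring
  have hpos : 0 < (u-v)^2 * (u⁻¹*v⁻¹) :=
    mul_pos hsq (mul_pos (inv_pos.mpr hu) (inv_pos.mpr hv))
  have expand : (a*u⁻¹ + b*v⁻¹)*(a*u + b*v)
      = a^2*(u⁻¹*u) + b^2*(v⁻¹*v) + a*b*(u⁻¹*v + v⁻¹*u) := by ring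
  rw [expand, e1, e2]
  nlinarith [mul_pos (mul_pos ha hb) (by linarith [key, hpos] : (0:ℝ) < u⁻¹*v + v⁻¹*u - 2)]

/-- Glue: positive * (nonneg-monotone-convex × positive-monotone-strictly-convex) + const
is strictly convex. -/
lemma glue {S : Set ℝ} {f g W : ℝ → ℝ} {c k : ℝ} (hc : 0 < c) (hS : Convex ℝ S)
    (hf0 : ∀ x ∈ S, 0 < f x) (hfm : MonotoneOn f S) (hfc : ConvexOn ℝ S f)
    (hg0 : ∀ x ∈ S, 0 < g x) (hgm : MonotoneOn g S) (hgc : StrictConvexOn ℝ S g)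
    (hW : ∀ x ∈ S, W x = c * (f x * g x) + k) :
    StrictConvexOn ℝ S W := by
  refine ⟨hS, fun x hx y hy hxy a b ha hb hab => ?_⟩
  have hz : a • x + b • y ∈ S := hS hx hy ha.le hb.le hab
  simp only [smul_eq_mul] at hz ⊢
  rw [hW _ hz, hW _ hx, hW _ hy]
  have h1 : f (a*x+b*y) ≤ a * f x + b * f y := by
    have := hfc.2 hx hy ha.le hb.le hab
    simpa [smul_eq_mul] using this
  have h2 : g (a*x+b*y) < a * g x + b * g y := by
    have := hgc.2 hx hy hxy ha hb hab
    simpa [smul_eq_mul] using this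
  have hfz : 0 < f (a*x+b*y) := hf0 _ hz
  have hgz : 0 < g (a*x+b*y) := hg0 _ hz
  have hfxy : 0 < a*f x + b*f y := by nlinarith [hf0 x hx, hf0 y hy]
  have step1 : f (a*x+b*y) * g (a*x+b*y) ≤ (a*f x + b*f y) * g (a*x+b*y) :=
    mul_le_mul_of_nonneg_right h1 hgz.le
  have step2 : (a*f x + b*f y) * g (a*x+b*y) < (a*f x + b*f y) * (a*g x + b*g y) :=
    (mul_lt_mul_iff_right₀ hfxy).mpr h2
  have hcheb : 0 ≤ (f x - f y) * (g x - g y) := by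
    rcases le_total x y with h | h
    · have hfm' := hfm hx hy h
      have hgm' := hgm hx hy h
      nlinarith
    · have hfm' := hfm hy hx h
      have hgm' := hgm hy hx h
      nlinarith
  have step3 : (a*f x + b*f y) * (a*g x + b*g y) ≤ a*(f x*g x) + b*(f y*g y) := by
    have expand : a*(f x*g x) + b*(f y*g y) - (a*f x + b*f y)*(a*g x + b*g y)
        = a*b*((f x - f y)*(g x - g y)) := by
      linear_combination (-(a*(f x*g x) + b*(f y*g y)))*hab
    linarith [expand, mul_nonneg (mul_pos ha hb).le hcheb]
  have chain : f (a*x+b*y) * g (a*x+b*y) < a*(f x*g x) + b*(f y*g y) := by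
    linarith [step1, step2, step3]
  have hck := mul_lt_mul_of_pos_left chain hc
  have hrhs : a*(c*(f x*g x)+k) + b*(c*(f y*g y)+k)
      = c*(a*(f x*g x)+b*(f y*g y)) + k := by linear_combination k*hab
  linarith [hck, hrhs]

end MMsAux

/-- For every integer `s ≥ 1` and every `μ > 0`, the function
`ρ ↦ W(ρ,s,μ)` is strictly convex on the open interval `(0,1)`. -/
theorem Wtime_strictConvexOn (s : ℕ) (hs : 1 ≤ s) (μ : ℝ) (hμ : 0 < μ) :
    StrictConvexOn ℝ (Set.Ioo (0 : ℝ) 1) (fun ρ : ℝ => Wtime ρ s μ) := by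
  
  have hσ : (0:ℝ) < (s:ℝ) := by exact_mod_cast hs
  have hc : (0:ℝ) < 1/(μ*(s:ℝ)) := by positivity
  refine MMsAux.glue (f := MMsAux.Fc s) (g := MMsAux.gg) (c := 1/(μ*(s:ℝ))) (k := 1/μ)
    hc (convex_Ioo 0 1) (fun x hx => MMsAux.Fc_pos hs hx) (MMsAux.monotoneOn_Fc hs)
    (MMsAux.convexOn_Fc hs) (fun x hx => MMsAux.gg_pos hx) MMsAux.gg_mono
    MMsAux.gg_strictConvexOn ?_
  intro ρ hρ
  have h1ρ : (1:ℝ) - ρ ≠ 0 := by have := hρ.2; intro h; simp only [Set.mem_Ioo] at hρ; linarith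
  unfold Wtime MMsAux.gg
  rw [MMsAux.ErlangP_eq hs hρ]
  field_simp
end

section
/- Let c ≥ 1 be an integer, μ > 0, and let I_j be a finite index set with nonnegative rates λ_i ≥ 0 and binary assignments x_i ∈ {0,1} for i ∈ I_j. Let z ∈ {0,1}, let W ≥ 0 be a real number, and let A, B be real numbers with B ≥ 0 such that A + B·ρ ≤ W^ν(ρ,c) for all ρ ∈ (0,1). Assume that if z = 1 then ρ* := (Σ_{i∈I_j} λ_i x_i)/(μ·c) lies in (0,1) and W ≥ W^ν(ρ*,c)/(μ·c) + 1/μ. Then the cutting-plane inequality W ≥ A·z/(μ·c) + B·(Σ_{i∈I_j} λ_i·(z + x_i − 1))/(μ²·c²) + z/μ holds; that is, the conditional cut (W_cut_exact) is valid for all feasible integral solutions. -/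
open Finset

/-- The scaled delay function `W^ν(ρ,s) = P(ρ,s)/(1-ρ)`. -/
noncomputable def Wnu (ρ : ℝ) (s : ℕ) : ℝ := ErlangP ρ s / (1 - ρ)

/-- Validity of the conditional cutting-plane inequality
(W_cut_exact) for the M/M/c waiting time: if `A + B·ρ` is an affine
underestimator of `W^ν(·,c)` on `(0,1)` with `B ≥ 0`, and whenever `z = 1` the
utilization `ρ* = (Σ λ_i x_i)/(μ c)` lies in `(0,1)` and
`W ≥ W^ν(ρ*,c)/(μ c) + 1/μ`, then the cut
`W ≥ A·z/(μ c) + B·(Σ λ_i (z + x_i − 1))/(μ² c²) + z/μ` holds. -/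
theorem cut_valid {ι : Type*} (Ij : Finset ι) (c : ℕ) (hc : 1 ≤ c)
    (μ : ℝ) (hμ : 0 < μ)
    (lam : ι → ℝ) (hlam : ∀ i ∈ Ij, 0 ≤ lam i)
    (x : ι → ℝ) (hx : ∀ i ∈ Ij, x i = 0 ∨ x i = 1)
    (z : ℝ) (hz : z = 0 ∨ z = 1)
    (W : ℝ) (hW : 0 ≤ W)
    (A B : ℝ) (hB : 0 ≤ B)
    (htan : ∀ ρ ∈ Set.Ioo (0 : ℝ) 1, A + B * ρ ≤ Wnu ρ c)
    (hcond : z = 1 →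
      (∑ i ∈ Ij, lam i * x i) / (μ * (c : ℝ)) ∈ Set.Ioo (0 : ℝ) 1 ∧
      Wnu ((∑ i ∈ Ij, lam i * x i) / (μ * (c : ℝ))) c / (μ * (c : ℝ)) + 1 / μ ≤ W) :
    A * z / (μ * (c : ℝ)) +
      B * (∑ i ∈ Ij, lam i * (z + x i - 1)) / (μ ^ 2 * (c : ℝ) ^ 2) + z / μ ≤ W := by
  have hcpos : (0:ℝ) < (c:ℝ) := by exact_mod_cast hc
  have hμc : (0:ℝ) < μ * c := mul_pos hμ hcpos
  rcases hz with hz | hz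
  · subst hz
    have hsum : ∑ i ∈ Ij, lam i * (0 + x i - 1) ≤ 0 := by
      apply Finset.sum_nonpos
      intro i hi
      have hl := hlam i hi
      rcases hx i hi with h | h <;> rw [h] <;> nlinarith
    have : B * (∑ i ∈ Ij, lam i * (0 + x i - 1)) ≤ 0 :=
      mul_nonpos_of_nonneg_of_nonpos hB hsum
    have hden : (0:ℝ) < μ ^ 2 * (c:ℝ) ^ 2 := by positivity
    have := div_nonpos_of_nonpos_of_nonneg this hden.le
    simp only [zero_add] at this ⊢
    simp only [mul_zero, zero_div, add_zero]
    linarith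
  · subst hz
    obtain ⟨hmem, hWge⟩ := hcond rfl
    set ρ := (∑ i ∈ Ij, lam i * x i) / (μ * (c:ℝ)) with hρ
    have hsum : ∑ i ∈ Ij, lam i * (1 + x i - 1) = ∑ i ∈ Ij, lam i * x i := by
      apply Finset.sum_congr rfl; intro i hi; ring
    have hkey : A * 1 / (μ * (c : ℝ)) +
        B * (∑ i ∈ Ij, lam i * (1 + x i - 1)) / (μ ^ 2 * (c : ℝ) ^ 2) + 1 / μ
        = (A + B * ρ) / (μ * c) + 1 / μ := by
      rw [hsum, hρ]
      field_simp
    rw [hkey]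
    have h1 : (A + B * ρ) / (μ * c) ≤ Wnu ρ c / (μ * c) :=
      (div_le_div_iff_of_pos_right hμc).mpr (htan ρ hmem)
    linarith
end

section
/- Let c ≥ 1 be an integer, μ > 0, and let I_j be a finite index set with nonnegative rates λ_i ≥ 0 and binary assignments x_i ∈ {0,1} for i ∈ I_j. Let κ ≥ 0 be a real scaling factor (κ = (1 + c_k²)/2 for a service-time squared coefficient of variation c_k² ≥ 0). Let z ∈ {0,1}, let W ≥ 0 be a real number, and let A, B be real numbers with B ≥ 0 such that A + B·ρ ≤ W^ν(ρ,c) for all ρ ∈ (0,1). Assume that if z = 1 then ρ* := (Σ_{i∈I_j} λ_i x_i)/(μ·c) lies in (0,1) and W ≥ κ·W^ν(ρ*,c)/(μ·c) + 1/μ. Then the scaled cutting-plane inequality W ≥ κ·(A·z/(μ·c) + B·(Σ_{i∈I_j} λ_i·(z + x_i − 1))/(μ²·c²)) + z/μ holds; that is, the conditional cut for the M/G/c approximation is valid. -/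
open Finset

/-- Validity of the scaled conditional cutting-plane inequality
for the M/G/c (Allen–Cunneen) approximation with scaling factor
`κ = (1 + c_k²)/2 ≥ 0`: if `A + B·ρ` underestimates `W^ν(·,c)` on `(0,1)` with
`B ≥ 0`, and whenever `z = 1` the utilization `ρ* = (Σ λ_i x_i)/(μ c)` lies in
`(0,1)` and `W ≥ κ·W^ν(ρ*,c)/(μ c) + 1/μ`, then the scaled cut
`W ≥ κ·(A·z/(μ c) + B·(Σ λ_i (z + x_i − 1))/(μ² c²)) + z/μ` holds. -/
theorem cut_valid_mgc {ι : Type*} (Ij : Finset ι) (c : ℕ) (hc : 1 ≤ c)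
    (μ : ℝ) (hμ : 0 < μ)
    (lam : ι → ℝ) (hlam : ∀ i ∈ Ij, 0 ≤ lam i)
    (x : ι → ℝ) (hx : ∀ i ∈ Ij, x i = 0 ∨ x i = 1)
    (κ : ℝ) (hκ : 0 ≤ κ)
    (z : ℝ) (hz : z = 0 ∨ z = 1)
    (W : ℝ) (hW : 0 ≤ W)
    (A B : ℝ) (hB : 0 ≤ B)
    (htan : ∀ ρ ∈ Set.Ioo (0 : ℝ) 1, A + B * ρ ≤ Wnu ρ c)
    (hcond : z = 1 →
      (∑ i ∈ Ij, lam i * x i) / (μ * (c : ℝ)) ∈ Set.Ioo (0 : ℝ) 1 ∧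
      κ * Wnu ((∑ i ∈ Ij, lam i * x i) / (μ * (c : ℝ))) c / (μ * (c : ℝ)) + 1 / μ ≤ W) :
    κ * (A * z / (μ * (c : ℝ)) +
        B * (∑ i ∈ Ij, lam i * (z + x i - 1)) / (μ ^ 2 * (c : ℝ) ^ 2)) + z / μ ≤ W := by

  have hcpos : (0:ℝ) < (c:ℝ) := by exact_mod_cast Nat.lt_of_lt_of_le Nat.zero_lt_one hc
  have hμc : (0:ℝ) < μ * (c:ℝ) := mul_pos hμ hcpos
  rcases hz with hz0 | hz1
  · subst hz0
    have hsum : (∑ i ∈ Ij, lam i * (0 + x i - 1)) ≤ 0 := by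
      apply Finset.sum_nonpos
      intro i hi
      have := hlam i hi
      rcases hx i hi with h | h <;> nlinarith
    have : κ * (A * 0 / (μ * (c : ℝ)) +
        B * (∑ i ∈ Ij, lam i * (0 + x i - 1)) / (μ ^ 2 * (c : ℝ) ^ 2)) + 0 / μ ≤ 0 := by
      have h2 : (0:ℝ) < μ ^ 2 * (c:ℝ) ^ 2 := by positivity
      have : B * (∑ i ∈ Ij, lam i * (0 + x i - 1)) / (μ ^ 2 * (c : ℝ) ^ 2) ≤ 0 := by
        apply div_nonpos_of_nonpos_of_nonneg _ h2.le
        exact mul_nonpos_of_nonneg_of_nonpos hB hsum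
      have hz : A * (0:ℝ) / (μ * (c : ℝ)) = 0 := by ring
      rw [hz, zero_add, zero_div, add_zero]
      exact mul_nonpos_of_nonneg_of_nonpos hκ this
    linarith
  · subst hz1
    obtain ⟨hρ, hWge⟩ := hcond rfl
    set ρ := (∑ i ∈ Ij, lam i * x i) / (μ * (c : ℝ)) with hρdef
    have htan' := htan ρ hρ
    have hsum : (∑ i ∈ Ij, lam i * (1 + x i - 1)) = ∑ i ∈ Ij, lam i * x i := by
      apply Finset.sum_congr rfl; intro i _; ring
    have key : A * 1 / (μ * (c : ℝ)) +
        B * (∑ i ∈ Ij, lam i * (1 + x i - 1)) / (μ ^ 2 * (c : ℝ) ^ 2)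
        = (A + B * ρ) / (μ * (c:ℝ)) := by
      rw [hsum, hρdef]
      field_simp
    rw [key]
    have h1 : (A + B * ρ) / (μ * (c:ℝ)) ≤ Wnu ρ c / (μ * (c:ℝ)) := by gcongr
    have h2 : κ * ((A + B * ρ) / (μ * (c:ℝ))) ≤ κ * Wnu ρ c / (μ * (c:ℝ)) := by
      rw [mul_div_assoc]
      exact mul_le_mul_of_nonneg_left h1 hκ
    linarith
end
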